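/- arXiv:1401.1086 — 2 statements merged into one kernel-verified Lean document; each statement's English description precedes it below -/
import Mathlib

section
/- Let S be a finite set, H a finite family of subsets of S such that every element of S belongs to at least one member of H, and k a natural number. Build the network G₀ with vertex set {v_h : h ∈ H} ∪ {v_s : s ∈ S}, an edge {v_h, v_s} exactly when s ∈ h, V_src = {v_h : h ∈ H}, V_ld = {v_s : s ∈ S}, and α = |H| + |S|. Then there exists H' ⊆ H with |H'| ≤ k and ⋃H' = S if and only if there exists a defense V_d with |V_d| ≤ k such that p({v_h : h ∈ H}, V_d) = 0 (i.e., the attack destroying all undefended source nodes disconnects no load node). -/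
open scoped Classical

noncomputable section

variable {V : Type*} [Fintype V] [DecidableEq V]

/-- The number of shortest paths between `s` and `t` in `G` (σ_G(s,t)). -/
def numSP (G : SimpleGraph V) (s t : V) : ℕ :=
  Nat.card {w : G.Walk s t // w.length = G.dist s t}

/-- The number of shortest paths between `s` and `t` in `G` passing through edge `e`
(σ_G(s,t | e)). -/
def numSPthru (G : SimpleGraph V) (s t : V) (e : Sym2 V) : ℕ :=
  Nat.card {w : G.Walk s t // w.length = G.dist s t ∧ e ∈ w.edges}

/-- `N_G(t)`: the vertices of `Vsrc \ {t}` reachable from `t` in `G` at minimum distance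
from `t`. -/
def nearestSources (Vsrc : Finset V) (G : SimpleGraph V) (t : V) : Finset V :=
  ((Vsrc.erase t).filter (fun s => G.Reachable t s)).filter
    (fun s => ∀ s' ∈ (Vsrc.erase t).filter (fun s'' => G.Reachable t s''),
      G.dist t s ≤ G.dist t s')

/-- The load of edge `e` in `G`:
`load_G(e) = Σ_{t ∈ Vld} Σ_{s ∈ N_G(t)} σ_G(s,t|e) / (|N_G(t)|·σ_G(s,t))`. -/
def eload (Vsrc Vld : Finset V) (G : SimpleGraph V) (e : Sym2 V) : ℝ :=
  ∑ t ∈ Vld, ∑ s ∈ nearestSources Vsrc G t,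
    (numSPthru G s t e : ℝ) / (((nearestSources Vsrc G t).card : ℝ) * (numSP G s t : ℝ))

/-- The failure operator: removes every edge whose current load exceeds its capacity
`c_e = (1+α)·load_{G₀}(e)`. -/
def Fop (Vsrc Vld : Finset V) (G0 : SimpleGraph V) (α : ℝ) (G : SimpleGraph V) :
    SimpleGraph V where
  Adj u v := G.Adj u v ∧ eload Vsrc Vld G s(u, v) ≤ (1 + α) * eload Vsrc Vld G0 s(u, v)
  symm := by
    constructor
    intro u v h
    refine ⟨h.1.symm, ?_⟩
    rw [Sym2.eq_swap]
    exact h.2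
  loopless := ⟨fun v h => G.loopless.irrefl v h.1⟩

/-- `F*(G)`: the fixed point reached by iterating the failure operator (reached after at
most `|E|+1 ≤ (card V)^2` applications, since each non-trivial application removes an edge). -/
def Fstar (Vsrc Vld : Finset V) (G0 : SimpleGraph V) (α : ℝ) (G : SimpleGraph V) :
    SimpleGraph V :=
  (Fop Vsrc Vld G0 α)^[Fintype.card V ^ 2] G

/-- `G − S`: the (induced) subgraph obtained by deleting the vertices of `S`. -/
def deleteVerts (G : SimpleGraph V) (S : Finset V) : SimpleGraph V where
  Adj u v := G.Adj u v ∧ u ∉ S ∧ v ∉ S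
  symm := ⟨fun u v h => ⟨h.1.symm, h.2.2, h.2.1⟩⟩
  loopless := ⟨fun v h => G.loopless.irrefl v h.1⟩

/-- `disc(G)`: the number of load nodes from which no source (other than itself) is
reachable in `G`. -/
def disc (Vsrc Vld : Finset V) (G : SimpleGraph V) : ℕ :=
  (Vld.filter (fun t => ∀ s ∈ Vsrc, s ≠ t → ¬ G.Reachable t s)).card

/-- The payoff `p(V_a,V_d) = disc(F*(G₀ − (V_a \ V_d)))`. -/
def payoff (Vsrc Vld : Finset V) (G0 : SimpleGraph V) (α : ℝ) (Va Vd : Finset V) : ℕ :=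
  disc Vsrc Vld (Fstar Vsrc Vld G0 α (deleteVerts G0 (Va \ Vd)))

/-- The bipartite network of the set-cover reduction: a source vertex `Sum.inl h` for each
`h ∈ H`, a load vertex `Sum.inr s` for each `s ∈ S`, with an edge `{v_h, v_s}` exactly when
`s ∈ h`. -/
def coverGraph {S : Type*} [Fintype S] [DecidableEq S] (H : Finset (Finset S)) :
    SimpleGraph (Finset S ⊕ S) :=
  SimpleGraph.fromRel (fun u v => ∃ h ∈ H, ∃ s ∈ h, u = Sum.inl h ∧ v = Sum.inr s)



set_option linter.unusedSectionVars false

lemma walk_len_one {G : SimpleGraph V} {a b : V} (w : G.Walk a b) (hw : w.length = 1) :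
    ∃ h : G.Adj a b, w = SimpleGraph.Walk.cons h SimpleGraph.Walk.nil := by
  cases w with
  | nil => simp at hw
  | cons h p =>
    cases p with
    | nil => exact ⟨h, rfl⟩
    | cons h' q => simp [SimpleGraph.Walk.length_cons] at hw

lemma numSP_of_adj {G : SimpleGraph V} {a b : V} (h : G.Adj a b) : numSP G a b = 1 := by
  have hd : G.dist a b = 1 := SimpleGraph.dist_eq_one_iff_adj.mpr h
  rw [numSP, Nat.card_eq_one_iff_unique]
  refine ⟨⟨?_⟩, ⟨⟨SimpleGraph.Walk.cons h SimpleGraph.Walk.nil, by simp [hd]⟩⟩⟩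
  rintro ⟨w, hw⟩ ⟨w', hw'⟩
  obtain ⟨h1, rfl⟩ := walk_len_one w (by rw [hw, hd])
  obtain ⟨h2, rfl⟩ := walk_len_one w' (by rw [hw', hd])
  rfl

lemma numSPthru_of_adj {G : SimpleGraph V} {a b : V} (h : G.Adj a b) (e : Sym2 V) :
    numSPthru G a b e = if e = s(a, b) then 1 else 0 := by
  have hd : G.dist a b = 1 := SimpleGraph.dist_eq_one_iff_adj.mpr h
  split_ifs with he
  · rw [numSPthru, Nat.card_eq_one_iff_unique]
    refine ⟨⟨?_⟩, ⟨⟨SimpleGraph.Walk.cons h SimpleGraph.Walk.nil, by simp [hd, he]⟩⟩⟩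
    rintro ⟨w, hw, -⟩ ⟨w', hw', -⟩
    obtain ⟨h1, rfl⟩ := walk_len_one w (by rw [hw, hd])
    obtain ⟨h2, rfl⟩ := walk_len_one w' (by rw [hw', hd])
    rfl
  · have : IsEmpty {w : G.Walk a b // w.length = G.dist a b ∧ e ∈ w.edges} := by
      constructor
      rintro ⟨w, hw, hmem⟩
      obtain ⟨h1, rfl⟩ := walk_len_one w (by rw [hw, hd])
      simp at hmem
      exact he hmem
    exact Nat.card_of_isEmpty

lemma mem_nearestSources {Vsrc : Finset V} {G : SimpleGraph V} {t x : V} :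
    x ∈ nearestSources Vsrc G t ↔
      x ∈ Vsrc ∧ x ≠ t ∧ G.Reachable t x ∧
        ∀ s', s' ∈ Vsrc → s' ≠ t → G.Reachable t s' → G.dist t x ≤ G.dist t s' := by
  simp only [nearestSources, Finset.mem_filter, Finset.mem_erase]
  constructor
  · rintro ⟨⟨⟨hne, hmem⟩, hre⟩, hmin⟩
    exact ⟨hmem, hne, hre, fun s' a b c => hmin s' ⟨⟨b, a⟩, c⟩⟩
  · rintro ⟨hmem, hne, hre, hmin⟩
    exact ⟨⟨⟨hne, hmem⟩, hre⟩, fun s' ⟨⟨a, b⟩, c⟩ => hmin s' b a c⟩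

lemma Fop_le (Vsrc Vld : Finset V) (G0 : SimpleGraph V) (α : ℝ) (G : SimpleGraph V) :
    Fop Vsrc Vld G0 α G ≤ G := by
  intro u v h
  exact (show G.Adj u v ∧ _ from h).1

lemma Fstar_le (Vsrc Vld : Finset V) (G0 : SimpleGraph V) (α : ℝ) (G : SimpleGraph V) :
    Fstar Vsrc Vld G0 α G ≤ G := by
  rw [Fstar]
  generalize Fintype.card V ^ 2 = n
  induction n with
  | zero => simp
  | succ n ih =>
    rw [Function.iterate_succ_apply']
    exact le_trans (Fop_le _ _ _ _ _) ih

section Reduction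

variable {S : Type*} [Fintype S] [DecidableEq S]

lemma adj_char {G : SimpleGraph (Finset S ⊕ S)} {K : Finset (Finset S)}
    (hG : ∀ u v, G.Adj u v ↔ ∃ h ∈ K, ∃ s ∈ h,
      (u = Sum.inl h ∧ v = Sum.inr s) ∨ (u = Sum.inr s ∧ v = Sum.inl h))
    (h : Finset S) (s : S) : G.Adj (Sum.inr s) (Sum.inl h) ↔ h ∈ K ∧ s ∈ h := by
  rw [hG]
  constructor
  · rintro ⟨h1, hh1, s1, hs1, ⟨he1, he2⟩ | ⟨he1, he2⟩⟩
    · exact absurd he1 (by simp)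
    · obtain rfl : s1 = s := by simpa using he1.symm
      obtain rfl : h1 = h := by simpa using he2.symm
      exact ⟨hh1, hs1⟩
  · rintro ⟨hh, hs⟩
    exact ⟨h, hh, s, hs, Or.inr ⟨rfl, rfl⟩⟩

lemma adj_shape {G : SimpleGraph (Finset S ⊕ S)} {K : Finset (Finset S)}
    (hG : ∀ u v, G.Adj u v ↔ ∃ h ∈ K, ∃ s ∈ h,
      (u = Sum.inl h ∧ v = Sum.inr s) ∨ (u = Sum.inr s ∧ v = Sum.inl h))
    {s : S} {x : Finset S ⊕ S} (hx : G.Adj (Sum.inr s) x) :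
    ∃ h, x = Sum.inl h ∧ h ∈ K ∧ s ∈ h := by
  rw [hG] at hx
  obtain ⟨h1, hh1, s1, hs1, ⟨he1, he2⟩ | ⟨he1, he2⟩⟩ := hx
  · exact absurd he1 (by simp)
  · obtain rfl : s1 = s := by simpa using he1.symm
    exact ⟨h1, he2, hh1, hs1⟩

lemma nearest_eq {G : SimpleGraph (Finset S ⊕ S)} {H K : Finset (Finset S)}
    (hG : ∀ u v, G.Adj u v ↔ ∃ h ∈ K, ∃ s ∈ h,
      (u = Sum.inl h ∧ v = Sum.inr s) ∨ (u = Sum.inr s ∧ v = Sum.inl h))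
    (hK : K ⊆ H) {s : S} (hc : ∃ h ∈ K, s ∈ h) :
    nearestSources (H.image Sum.inl) G (Sum.inr s)
      = (K.filter (fun h => s ∈ h)).image Sum.inl := by
  obtain ⟨h1, hh1, hs1⟩ := hc
  have hadj1 : G.Adj (Sum.inr s) (Sum.inl h1) := (adj_char hG h1 s).mpr ⟨hh1, hs1⟩
  have hd1 : G.dist (Sum.inr s) (Sum.inl h1) = 1 := SimpleGraph.dist_eq_one_iff_adj.mpr hadj1
  ext x
  rw [mem_nearestSources]
  constructor
  · rintro ⟨hxV, hxt, hreach, hmin⟩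
    obtain ⟨h2, hh2, rfl⟩ := Finset.mem_image.mp hxV
    have hle : G.dist (Sum.inr s) (Sum.inl h2) ≤ 1 := by
      have := hmin (Sum.inl h1) (Finset.mem_image_of_mem _ (hK hh1)) (by simp) hadj1.reachable
      rwa [hd1] at this
    have hpos : 0 < G.dist (Sum.inr s) (Sum.inl h2) :=
      hreach.pos_dist_of_ne (by simp)
    have : G.dist (Sum.inr s) (Sum.inl h2) = 1 := le_antisymm hle hpos
    have hadj2 := SimpleGraph.dist_eq_one_iff_adj.mp this
    obtain ⟨hh2K, hsh2⟩ := (adj_char hG h2 s).mp hadj2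
    exact Finset.mem_image_of_mem _ (Finset.mem_filter.mpr ⟨hh2K, hsh2⟩)
  · intro hx
    obtain ⟨h2, hh2, rfl⟩ := Finset.mem_image.mp hx
    obtain ⟨hh2K, hsh2⟩ := Finset.mem_filter.mp hh2
    have hadj2 : G.Adj (Sum.inr s) (Sum.inl h2) := (adj_char hG h2 s).mpr ⟨hh2K, hsh2⟩
    refine ⟨Finset.mem_image_of_mem _ (hK hh2K), by simp, hadj2.reachable, ?_⟩
    intro s' hs' hne hreach'
    rw [SimpleGraph.dist_eq_one_iff_adj.mpr hadj2]
    exact hreach'.pos_dist_of_ne (Ne.symm hne)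

lemma eload_eq {G : SimpleGraph (Finset S ⊕ S)} {H K : Finset (Finset S)}
    (hG : ∀ u v, G.Adj u v ↔ ∃ h ∈ K, ∃ s ∈ h,
      (u = Sum.inl h ∧ v = Sum.inr s) ∨ (u = Sum.inr s ∧ v = Sum.inl h))
    (hK : K ⊆ H) (hKcov : ∀ s : S, ∃ h ∈ K, s ∈ h)
    {h0 : Finset S} {s0 : S} (hh0 : h0 ∈ K) (hs0 : s0 ∈ h0) :
    eload (H.image Sum.inl) (Finset.univ.image Sum.inr) G s(Sum.inl h0, Sum.inr s0)
      = 1 / ((K.filter (fun h => s0 ∈ h)).card : ℝ) := by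
  have hN : ∀ s : S, nearestSources (H.image Sum.inl) G (Sum.inr s)
      = (K.filter (fun h => s ∈ h)).image Sum.inl := fun s => nearest_eq hG hK (hKcov s)
  rw [eload, Finset.sum_image (fun a _ b _ h => Sum.inr.inj h)]
  have hterm : ∀ s : S, (∑ x ∈ nearestSources (H.image Sum.inl) G (Sum.inr s),
      (numSPthru G x (Sum.inr s) s(Sum.inl h0, Sum.inr s0) : ℝ) /
        (((nearestSources (H.image Sum.inl) G (Sum.inr s)).card : ℝ) *
          (numSP G x (Sum.inr s) : ℝ)))
      = if s = s0 then 1 / ((K.filter (fun h => s0 ∈ h)).card : ℝ) else 0 := by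
    intro s
    rw [hN s, Finset.sum_image (fun a _ b _ h => Sum.inl.inj h),
      Finset.card_image_of_injective _ Sum.inl_injective]
    have hsummand : ∀ h ∈ K.filter (fun h => s ∈ h),
        (numSPthru G (Sum.inl h) (Sum.inr s) s(Sum.inl h0, Sum.inr s0) : ℝ) /
          (((K.filter (fun h => s ∈ h)).card : ℝ) * (numSP G (Sum.inl h) (Sum.inr s) : ℝ))
        = if h = h0 ∧ s = s0 then 1 / ((K.filter (fun h => s ∈ h)).card : ℝ) else 0 := by
      intro h hh
      obtain ⟨hhK, hsh⟩ := Finset.mem_filter.mp hh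
      have hadj : G.Adj (Sum.inl h) (Sum.inr s) := ((adj_char hG h s).mpr ⟨hhK, hsh⟩).symm
      rw [numSP_of_adj hadj, numSPthru_of_adj hadj]
      have hcond : (s(Sum.inl h0, Sum.inr s0) : Sym2 (Finset S ⊕ S))
          = s(Sum.inl h, Sum.inr s) ↔ (h = h0 ∧ s = s0) := by
        rw [Sym2.eq_iff]
        constructor
        · rintro (⟨he1, he2⟩ | ⟨he1, he2⟩)
          · exact ⟨(Sum.inl.inj he1).symm, (Sum.inr.inj he2).symm⟩
          · exact absurd he1 (by simp)
        · rintro ⟨rfl, rfl⟩; exact Or.inl ⟨rfl, rfl⟩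
      by_cases hc : h = h0 ∧ s = s0
      · rw [if_pos (hcond.mpr hc), if_pos hc]
        push_cast
        rw [mul_one, one_div]
      · rw [if_neg (fun hx => hc (hcond.mp hx)), if_neg hc]
        push_cast
        rw [zero_div]
    rw [Finset.sum_congr rfl hsummand]
    by_cases hss : s = s0
    · subst hss
      have : ∀ h : Finset S,
          (if h = h0 ∧ s = s then 1 / ((K.filter (fun h => s ∈ h)).card : ℝ) else 0)
          = if h = h0 then 1 / ((K.filter (fun h => s ∈ h)).card : ℝ) else 0 := by
        intro h; simp
      rw [Finset.sum_congr rfl (fun h _ => this h), Finset.sum_ite_eq',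
        if_pos (Finset.mem_filter.mpr ⟨hh0, hs0⟩), if_pos rfl]
    · rw [if_neg hss, Finset.sum_eq_zero]
      intro h _
      rw [if_neg (fun hx => hss hx.2)]
  rw [Finset.sum_congr rfl (fun s _ => hterm s), Finset.sum_ite_eq', if_pos (Finset.mem_univ s0)]

lemma coverGraph_adj (H : Finset (Finset S)) (u v : Finset S ⊕ S) :
    (coverGraph H).Adj u v ↔ ∃ h ∈ H, ∃ s ∈ h,
      (u = Sum.inl h ∧ v = Sum.inr s) ∨ (u = Sum.inr s ∧ v = Sum.inl h) := by
  rw [coverGraph, SimpleGraph.fromRel_adj]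
  constructor
  · rintro ⟨hne, ⟨h, hh, s, hs, he1, he2⟩ | ⟨h, hh, s, hs, he1, he2⟩⟩
    · exact ⟨h, hh, s, hs, Or.inl ⟨he1, he2⟩⟩
    · exact ⟨h, hh, s, hs, Or.inr ⟨he2, he1⟩⟩
  · rintro ⟨h, hh, s, hs, ⟨rfl, rfl⟩ | ⟨rfl, rfl⟩⟩
    · exact ⟨by simp, Or.inl ⟨h, hh, s, hs, rfl, rfl⟩⟩
    · exact ⟨by simp, Or.inr ⟨h, hh, s, hs, rfl, rfl⟩⟩

lemma deleteVerts_coverGraph_adj (H : Finset (Finset S)) (Vd : Finset (Finset S ⊕ S))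
    (u v : Finset S ⊕ S) :
    (deleteVerts (coverGraph H) ((H.image Sum.inl) \ Vd)).Adj u v ↔
      ∃ h ∈ H.filter (fun h => Sum.inl h ∈ Vd), ∃ s ∈ h,
        (u = Sum.inl h ∧ v = Sum.inr s) ∨ (u = Sum.inr s ∧ v = Sum.inl h) := by
  show (coverGraph H).Adj u v ∧ _ ∧ _ ↔ _
  rw [coverGraph_adj]
  constructor
  · rintro ⟨⟨h, hh, s, hs, hor⟩, hu, hv⟩
    refine ⟨h, Finset.mem_filter.mpr ⟨hh, ?_⟩, s, hs, hor⟩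
    rcases hor with ⟨rfl, rfl⟩ | ⟨rfl, rfl⟩
    · by_contra hmem
      exact hu (Finset.mem_sdiff.mpr ⟨Finset.mem_image_of_mem _ hh, hmem⟩)
    · by_contra hmem
      exact hv (Finset.mem_sdiff.mpr ⟨Finset.mem_image_of_mem _ hh, hmem⟩)
  · rintro ⟨h, hh, s, hs, hor⟩
    obtain ⟨hhH, hhVd⟩ := Finset.mem_filter.mp hh
    have hinl : Sum.inl h ∉ (H.image Sum.inl) \ Vd := fun hx => (Finset.mem_sdiff.mp hx).2 hhVd
    have hinr : (Sum.inr s : Finset S ⊕ S) ∉ (H.image Sum.inl) \ Vd := by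
      intro hx
      obtain ⟨hx1, -⟩ := Finset.mem_sdiff.mp hx
      simp at hx1
    rcases hor with ⟨rfl, rfl⟩ | ⟨rfl, rfl⟩
    · exact ⟨⟨h, hhH, s, hs, Or.inl ⟨rfl, rfl⟩⟩, hinl, hinr⟩
    · exact ⟨⟨h, hhH, s, hs, Or.inr ⟨rfl, rfl⟩⟩, hinr, hinl⟩

end Reduction

/-- Correctness of the set-cover reduction for the defender's deterministic best response:
with `V_src = {v_h : h ∈ H}`, `V_ld = {v_s : s ∈ S}` and `α = |H| + |S|`, there is a cover
`H' ⊆ H` of `S` with `|H'| ≤ k` iff there is a defense `V_d` with `|V_d| ≤ k` against which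
the attack destroying all source nodes yields payoff `0`. -/
theorem set_cover_iff_defense_against_full_source_attack {S : Type*} [Fintype S]
    [DecidableEq S] (H : Finset (Finset S)) (hcov : ∀ s : S, ∃ h ∈ H, s ∈ h) (k : ℕ) :
    (∃ H' ⊆ H, H'.card ≤ k ∧ ∀ s : S, ∃ h ∈ H', s ∈ h) ↔
      (∃ Vd : Finset (Finset S ⊕ S), Vd.card ≤ k ∧
        payoff (H.image Sum.inl) (Finset.univ.image Sum.inr) (coverGraph H)
          ((H.card : ℝ) + (Fintype.card S : ℝ)) (H.image Sum.inl) Vd = 0) := by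
  constructor
  · rintro ⟨H', hH'H, hcard, hcover⟩
    refine ⟨H'.image Sum.inl, le_trans Finset.card_image_le hcard, ?_⟩
    unfold payoff
    set Vsrc := H.image (Sum.inl : Finset S → Finset S ⊕ S) with hVsrc
    set Vld := Finset.univ.image (Sum.inr : S → Finset S ⊕ S) with hVld
    set α : ℝ := (H.card : ℝ) + (Fintype.card S : ℝ) with hα
    set G0 := coverGraph H with hG0def
    set G' := deleteVerts G0 (Vsrc \ H'.image Sum.inl) with hG'def
    have hKeq : H.filter (fun h => Sum.inl h ∈ (H'.image Sum.inl : Finset (Finset S ⊕ S))) = H' := by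
      ext h
      simp only [Finset.mem_filter, Finset.mem_image]
      constructor
      · rintro ⟨hH, h', hh', he⟩
        obtain rfl := Sum.inl.inj he
        exact hh'
      · intro hh'
        exact ⟨hH'H hh', h, hh', rfl⟩
    have hG' : ∀ u v, G'.Adj u v ↔ ∃ h ∈ H', ∃ s ∈ h,
        (u = Sum.inl h ∧ v = Sum.inr s) ∨ (u = Sum.inr s ∧ v = Sum.inl h) := by
      intro u v
      rw [hG'def, hG0def, hVsrc, deleteVerts_coverGraph_adj, hKeq]
    have hG0 : ∀ u v, G0.Adj u v ↔ ∃ h ∈ H, ∃ s ∈ h,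
        (u = Sum.inl h ∧ v = Sum.inr s) ∨ (u = Sum.inr s ∧ v = Sum.inl h) := by
      intro u v
      rw [hG0def]
      exact coverGraph_adj H u v
    have hmain : ∀ (h1 : Finset S) (s1 : S), h1 ∈ H' → s1 ∈ h1 →
        eload Vsrc Vld G' s(Sum.inl h1, Sum.inr s1)
          ≤ (1 + α) * eload Vsrc Vld G0 s(Sum.inl h1, Sum.inr s1) := by
      intro h1 s1 hh1 hs1
      rw [hVsrc, hVld, eload_eq hG' hH'H hcover hh1 hs1,
        eload_eq hG0 (le_refl H) hcov (hH'H hh1) hs1]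
      have h1' : 1 ≤ (H'.filter (fun h => s1 ∈ h)).card :=
        Finset.card_pos.mpr ⟨h1, Finset.mem_filter.mpr ⟨hh1, hs1⟩⟩
      have h2' : (H'.filter (fun h => s1 ∈ h)).card ≤ (H.filter (fun h => s1 ∈ h)).card :=
        Finset.card_le_card (Finset.filter_subset_filter _ hH'H)
      have h3' : (H.filter (fun h => s1 ∈ h)).card ≤ H.card :=
        Finset.card_le_card (Finset.filter_subset _ _)
      have hc1 : (1 : ℝ) ≤ ((H'.filter (fun h => s1 ∈ h)).card : ℝ) := by exact_mod_cast h1'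
      have hc3 : ((H.filter (fun h => s1 ∈ h)).card : ℝ) ≤ (H.card : ℝ) := by exact_mod_cast h3'
      have hc0 : (0 : ℝ) < ((H'.filter (fun h => s1 ∈ h)).card : ℝ) := by linarith
      have hc0' : (0 : ℝ) < ((H.filter (fun h => s1 ∈ h)).card : ℝ) := by
        have : ((H'.filter (fun h => s1 ∈ h)).card : ℝ) ≤ ((H.filter (fun h => s1 ∈ h)).card : ℝ) := by
          exact_mod_cast h2'
        linarith
      have hSnn : (0 : ℝ) ≤ (Fintype.card S : ℝ) := by positivity
      rw [mul_one_div, div_le_div_iff₀ hc0 hc0', one_mul, hα]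
      nlinarith [mul_nonneg (by linarith : (0:ℝ) ≤ 1 + ((H.card : ℝ) + (Fintype.card S : ℝ)))
        (by linarith : (0:ℝ) ≤ ((H'.filter (fun h => s1 ∈ h)).card : ℝ) - 1)]
    have hfix : Fop Vsrc Vld G0 α G' = G' := by
      ext u v
      constructor
      · exact fun h => (show G'.Adj u v ∧ _ from h).1
      · intro hadj
        show G'.Adj u v ∧ _
        refine ⟨hadj, ?_⟩
        obtain ⟨h1, hh1, s1, hs1, hor⟩ := (hG' u v).mp hadj
        rcases hor with ⟨rfl, rfl⟩ | ⟨rfl, rfl⟩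
        · exact hmain h1 s1 hh1 hs1
        · rw [show (s(Sum.inr s1, Sum.inl h1) : Sym2 (Finset S ⊕ S))
            = s(Sum.inl h1, Sum.inr s1) from Sym2.eq_swap]
          exact hmain h1 s1 hh1 hs1
    have hstar : Fstar Vsrc Vld G0 α G' = G' := by
      rw [Fstar]
      exact Function.iterate_fixed hfix _
    rw [hstar, disc, Finset.card_eq_zero, Finset.filter_eq_empty_iff]
    intro t ht
    obtain ⟨s, -, rfl⟩ := Finset.mem_image.mp ht
    push_neg
    obtain ⟨h, hh, hs⟩ := hcover s
    exact ⟨Sum.inl h, Finset.mem_image_of_mem _ (hH'H hh), by simp,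
      ((adj_char hG' h s).mpr ⟨hh, hs⟩).reachable⟩
  · rintro ⟨Vd, hcard, hp⟩
    refine ⟨H.filter (fun h => Sum.inl h ∈ Vd), Finset.filter_subset _ _, ?_, ?_⟩
    · calc (H.filter (fun h => Sum.inl h ∈ Vd)).card
          = ((H.filter (fun h => Sum.inl h ∈ Vd)).image Sum.inl).card :=
            (Finset.card_image_of_injective _ Sum.inl_injective).symm
        _ ≤ Vd.card := by
            apply Finset.card_le_card
            intro x hx
            obtain ⟨h, hh, rfl⟩ := Finset.mem_image.mp hx
            exact (Finset.mem_filter.mp hh).2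
        _ ≤ k := hcard
    · intro s
      unfold payoff disc at hp
      rw [Finset.card_eq_zero, Finset.filter_eq_empty_iff] at hp
      have hs : (Sum.inr s : Finset S ⊕ S) ∈ Finset.univ.image Sum.inr :=
        Finset.mem_image_of_mem _ (Finset.mem_univ s)
      have hne := hp hs
      push_neg at hne
      obtain ⟨x, hxV, hxne, hreach⟩ := hne
      have hreach' : (deleteVerts (coverGraph H) ((H.image Sum.inl) \ Vd)).Reachable
          (Sum.inr s) x := hreach.mono (Fstar_le _ _ _ _ _)
      obtain ⟨w⟩ := hreach'
      cases w with
      | nil => exact absurd rfl hxne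
      | @cons _ y _ hadj p =>
        obtain ⟨h, rfl, hhK, hsh⟩ := adj_shape (deleteVerts_coverGraph_adj H Vd) hadj
        exact ⟨h, hhK, hsh⟩

end
end

section
/- Let S be a finite nonempty set, H a finite family of subsets of S such that every element of S belongs to at least one member of H, and k a natural number. Build the network G₀ with vertex set {v_h : h ∈ H} ∪ {v_s : s ∈ S}, an edge {v_h, v_s} exactly when s ∈ h, V_src = {v_h : h ∈ H}, V_ld = {v_s : s ∈ S}, and α = |H| + |S|. For each s ∈ S let V_a^s = {v_h : s ∈ h}. Then there exists H' ⊆ H with |H'| ≤ k and ⋃H' = S if and only if there exists a defense V_d with |V_d| ≤ k such that Σ_{s ∈ S} p(V_a^s, V_d) = 0 (equivalently, the expected payoff of the mixed attack that plays each V_a^s with probability 1/|S| against V_d is zero). -/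
open scoped Classical

noncomputable section

variable {V : Type*} [Fintype V] [DecidableEq V]

section AuxLemmas

lemma walk_len_one_s12 {G : SimpleGraph V} {s t : V} (h : G.Adj s t) (p : G.Walk s t)
    (hp : p.length = 1) : p = h.toWalk := by
  cases p with
  | nil => simp at hp
  | cons h' q =>
    cases q with
    | nil => rfl
    | cons h'' q' => simp at hp

lemma numSP_adj {G : SimpleGraph V} {s t : V} (h : G.Adj s t) : numSP G s t = 1 := by
  rw [numSP, SimpleGraph.dist_eq_one_iff_adj.mpr h, Nat.card_eq_one_iff_unique]
  refine ⟨⟨fun a b => ?_⟩, ⟨⟨h.toWalk, by simp⟩⟩⟩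
  ext1
  rw [walk_len_one_s12 h a.1 a.2, walk_len_one_s12 h b.1 b.2]

lemma numSPthru_self {G : SimpleGraph V} {s t : V} (h : G.Adj s t) :
    numSPthru G s t s(s, t) = 1 := by
  rw [numSPthru, SimpleGraph.dist_eq_one_iff_adj.mpr h, Nat.card_eq_one_iff_unique]
  refine ⟨⟨fun a b => ?_⟩, ⟨⟨h.toWalk, by simp, by simp [SimpleGraph.Adj.toWalk]⟩⟩⟩
  ext1
  rw [walk_len_one_s12 h a.1 a.2.1, walk_len_one_s12 h b.1 b.2.1]

lemma numSPthru_ne {G : SimpleGraph V} {s t : V} {e : Sym2 V} (h : G.Adj s t)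
    (he : e ≠ s(s, t)) : numSPthru G s t e = 0 := by
  rw [numSPthru]
  have : IsEmpty {w : G.Walk s t // w.length = G.dist s t ∧ e ∈ w.edges} := by
    constructor
    rintro ⟨w, hw1, hw2⟩
    rw [SimpleGraph.dist_eq_one_iff_adj.mpr h] at hw1
    rw [walk_len_one_s12 h w hw1] at hw2
    simp [SimpleGraph.Adj.toWalk] at hw2
    exact he hw2
  exact Nat.card_of_isEmpty

lemma exists_adj_of_reachable {G : SimpleGraph V} {t s : V} (h : G.Reachable t s)
    (hne : t ≠ s) : ∃ u, G.Adj t u := by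
  obtain ⟨w⟩ := h
  cases w with
  | nil => exact absurd rfl hne
  | cons h' _ => exact ⟨_, h'⟩

lemma mem_nearest_of_adj {Vsrc : Finset V} {G : SimpleGraph V} {t s : V}
    (hs : s ∈ Vsrc) (h : G.Adj t s) : s ∈ nearestSources Vsrc G t := by
  simp only [nearestSources, Finset.mem_filter, Finset.mem_erase]
  refine ⟨⟨⟨h.ne', hs⟩, h.reachable⟩, ?_⟩
  rintro s' ⟨⟨hne', _⟩, hr'⟩
  rw [SimpleGraph.dist_eq_one_iff_adj.mpr h]
  exact hr'.pos_dist_of_ne (Ne.symm hne')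

lemma nearest_adj {Vsrc : Finset V} {G : SimpleGraph V} {t : V}
    (hnb : ∀ u, G.Adj t u → u ∈ Vsrc) {s : V} (hs : s ∈ nearestSources Vsrc G t) :
    G.Adj t s := by
  rw [nearestSources, Finset.mem_filter] at hs
  obtain ⟨hs1, hmin⟩ := hs
  rw [Finset.mem_filter, Finset.mem_erase] at hs1
  obtain ⟨⟨hne, hsrc⟩, hreach⟩ := hs1
  obtain ⟨u, hu⟩ := exists_adj_of_reachable hreach (Ne.symm hne)
  have h1 : G.dist t s ≤ 1 := by
    have := hmin u (by
      rw [Finset.mem_filter, Finset.mem_erase]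
      exact ⟨⟨hu.ne', hnb u hu⟩, hu.reachable⟩)
    rwa [SimpleGraph.dist_eq_one_iff_adj.mpr hu] at this
  have h2 : 1 ≤ G.dist t s := hreach.pos_dist_of_ne (Ne.symm hne)
  exact SimpleGraph.dist_eq_one_iff_adj.mp (le_antisymm h1 h2)

lemma nearest_subset {Vsrc : Finset V} {G : SimpleGraph V} {t : V} :
    nearestSources Vsrc G t ⊆ Vsrc := by
  intro s hs
  simp only [nearestSources, Finset.mem_filter, Finset.mem_erase] at hs
  exact hs.1.1.2

lemma Fop_fixed (Vsrc Vld : Finset V) (G0 G : SimpleGraph V) (α : ℝ)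
    (hle : G ≤ G0)
    (hbip : ∀ u v, G0.Adj u v →
      (u ∈ Vld ∧ v ∈ Vsrc ∧ v ∉ Vld) ∨ (v ∈ Vld ∧ u ∈ Vsrc ∧ u ∉ Vld))
    (hα : (Vsrc.card : ℝ) ≤ 1 + α) :
    Fop Vsrc Vld G0 α G = G := by
  have key : ∀ u v, G.Adj u v → u ∈ Vld → v ∈ Vsrc → v ∉ Vld →
      eload Vsrc Vld G s(u, v) ≤ (1 + α) * eload Vsrc Vld G0 s(u, v) := by
    intro u v hG hu hv hv'
    have hG0 : G0.Adj u v := hle hG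
    have hnb : ∀ t, t ∈ Vld → ∀ w, G.Adj t w → w ∈ Vsrc := by
      intro t ht w hw
      rcases hbip t w (hle hw) with ⟨_, h2, _⟩ | ⟨_, _, h3⟩
      · exact h2
      · exact absurd ht h3
    -- Step 1 : the load of the edge in G is at most 1
    have step1 : eload Vsrc Vld G s(u, v) ≤ 1 := by
      rw [eload]
      have hzero : ∀ t ∈ Vld, t ≠ u →
          (∑ s ∈ nearestSources Vsrc G t, (numSPthru G s t s(u, v) : ℝ) /
            (((nearestSources Vsrc G t).card : ℝ) * (numSP G s t : ℝ))) = 0 := by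
        intro t ht htu
        refine Finset.sum_eq_zero fun s hs => ?_
        have hadj : G.Adj t s := nearest_adj (hnb t ht) hs
        have h0 : numSPthru G s t s(u, v) = 0 := by
          refine numSPthru_ne hadj.symm ?_
          rw [Ne, Sym2.eq_iff]
          rintro (⟨h1, h2⟩ | ⟨h1, h2⟩)
          · exact hv' (h2 ▸ ht)
          · exact htu h1.symm
        rw [h0]
        simp
      rw [Finset.sum_eq_single_of_mem u hu hzero]
      have hterm : ∀ s ∈ nearestSources Vsrc G u,
          (numSPthru G s u s(u, v) : ℝ) /
            (((nearestSources Vsrc G u).card : ℝ) * (numSP G s u : ℝ)) ≤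
          (if s = v then 1 / ((nearestSources Vsrc G u).card : ℝ) else 0) := by
        intro s hs
        have hadj : G.Adj u s := nearest_adj (hnb u hu) hs
        by_cases hsv : s = v
        · subst hsv
          rw [if_pos rfl, show s(u, s) = s(s, u) from Sym2.eq_swap,
            numSPthru_self hadj.symm, numSP_adj hadj.symm]
          simp
        · rw [if_neg hsv]
          have h0 : numSPthru G s u s(u, v) = 0 := by
            refine numSPthru_ne hadj.symm ?_
            rw [Ne, Sym2.eq_iff]
            rintro (⟨h1, h2⟩ | ⟨h1, h2⟩)
            · exact hadj.ne h1
            · exact hsv h2.symm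
          rw [h0]
          simp
      calc (∑ s ∈ nearestSources Vsrc G u, (numSPthru G s u s(u, v) : ℝ) /
              (((nearestSources Vsrc G u).card : ℝ) * (numSP G s u : ℝ)))
          ≤ ∑ s ∈ nearestSources Vsrc G u,
              (if s = v then 1 / ((nearestSources Vsrc G u).card : ℝ) else 0) :=
            Finset.sum_le_sum hterm
        _ = (if v ∈ nearestSources Vsrc G u then
              1 / ((nearestSources Vsrc G u).card : ℝ) else 0) :=
            Finset.sum_ite_eq' _ _ _
        _ ≤ 1 := by
            split
            · rename_i hvN
              rw [div_le_one (by exact_mod_cast Finset.card_pos.mpr ⟨v, hvN⟩)]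
              exact_mod_cast Finset.card_pos.mpr ⟨v, hvN⟩
            · norm_num
    -- Step 2 : lower bound for the load in G0
    have hvN0 : v ∈ nearestSources Vsrc G0 u := mem_nearest_of_adj hv hG0
    have hN0pos : (0 : ℝ) < ((nearestSources Vsrc G0 u).card : ℝ) := by
      exact_mod_cast Finset.card_pos.mpr ⟨v, hvN0⟩
    have hterm0 : (1 : ℝ) / ((nearestSources Vsrc G0 u).card : ℝ) ≤
        eload Vsrc Vld G0 s(u, v) := by
      rw [eload]
      have h1 : (1 : ℝ) / ((nearestSources Vsrc G0 u).card : ℝ) ≤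
          ∑ s ∈ nearestSources Vsrc G0 u, (numSPthru G0 s u s(u, v) : ℝ) /
            (((nearestSources Vsrc G0 u).card : ℝ) * (numSP G0 s u : ℝ)) := by
        have heq : (1 : ℝ) / ((nearestSources Vsrc G0 u).card : ℝ) =
            (numSPthru G0 v u s(u, v) : ℝ) /
              (((nearestSources Vsrc G0 u).card : ℝ) * (numSP G0 v u : ℝ)) := by
          rw [show s(u, v) = s(v, u) from Sym2.eq_swap, numSPthru_self hG0.symm,
            numSP_adj hG0.symm]
          simp
        rw [heq]
        exact Finset.single_le_sum (f := fun s => (numSPthru G0 s u s(u, v) : ℝ) /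
          (((nearestSources Vsrc G0 u).card : ℝ) * (numSP G0 s u : ℝ)))
          (fun s _ => by positivity) hvN0
      refine le_trans h1 (Finset.single_le_sum
        (f := fun t => ∑ s ∈ nearestSources Vsrc G0 t, (numSPthru G0 s t s(u, v) : ℝ) /
          (((nearestSources Vsrc G0 t).card : ℝ) * (numSP G0 s t : ℝ)))
        (fun t _ => Finset.sum_nonneg fun s _ => by positivity) hu)
    have h1α : (0 : ℝ) ≤ 1 + α := le_trans (by positivity) hα
    calc eload Vsrc Vld G s(u, v) ≤ 1 := step1
      _ ≤ (1 + α) * (1 / ((nearestSources Vsrc G0 u).card : ℝ)) := by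
          rw [mul_one_div, le_div_iff₀ hN0pos, one_mul]
          calc ((nearestSources Vsrc G0 u).card : ℝ) ≤ (Vsrc.card : ℝ) := by
                exact_mod_cast Finset.card_le_card nearest_subset
            _ ≤ 1 + α := hα
      _ ≤ (1 + α) * eload Vsrc Vld G0 s(u, v) :=
          mul_le_mul_of_nonneg_left hterm0 h1α
  ext u v
  constructor
  · exact fun h => h.1
  · intro hG
    refine ⟨hG, ?_⟩
    rcases hbip u v (hle hG) with ⟨h1, h2, h3⟩ | ⟨h1, h2, h3⟩
    · exact key u v hG h1 h2 h3
    · rw [show s(u, v) = s(v, u) from Sym2.eq_swap]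
      exact key v u hG.symm h1 h2 h3

lemma Fop_iter_le (Vsrc Vld : Finset V) (G0 : SimpleGraph V) (α : ℝ) :
    ∀ (n : ℕ) (G : SimpleGraph V), (Fop Vsrc Vld G0 α)^[n] G ≤ G := by
  intro n
  induction n with
  | zero => intro G; simp
  | succ n ih =>
    intro G
    rw [Function.iterate_succ_apply]
    exact le_trans (ih _) (fun _ _ h => h.1)

lemma Fstar_fixed (Vsrc Vld : Finset V) (G0 G : SimpleGraph V) (α : ℝ)
    (hle : G ≤ G0)
    (hbip : ∀ u v, G0.Adj u v →
      (u ∈ Vld ∧ v ∈ Vsrc ∧ v ∉ Vld) ∨ (v ∈ Vld ∧ u ∈ Vsrc ∧ u ∉ Vld))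
    (hα : (Vsrc.card : ℝ) ≤ 1 + α) :
    Fstar Vsrc Vld G0 α G = G :=
  Function.iterate_fixed (Fop_fixed Vsrc Vld G0 G α hle hbip hα) _

end AuxLemmas

/-- Correctness of the set-cover reduction for the defender's best response to a mixed
attack: with `V_src = {v_h : h ∈ H}`, `V_ld = {v_s : s ∈ S}`, `α = |H| + |S|` and, for each
`s ∈ S`, the attack `V_a^s = {v_h : s ∈ h}`, there is a cover `H' ⊆ H` of `S` with
`|H'| ≤ k` iff there is a defense `V_d` with `|V_d| ≤ k` such that
`Σ_{s ∈ S} p(V_a^s, V_d) = 0` (equivalently, the mixed attack playing each `V_a^s` with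
probability `1/|S|` has expected payoff `0` against `V_d`). -/
theorem set_cover_iff_defense_against_mixed_attack {S : Type*} [Fintype S] [DecidableEq S]
    [Nonempty S] (H : Finset (Finset S)) (hcov : ∀ s : S, ∃ h ∈ H, s ∈ h) (k : ℕ) :
    (∃ H' ⊆ H, H'.card ≤ k ∧ ∀ s : S, ∃ h ∈ H', s ∈ h) ↔
      (∃ Vd : Finset (Finset S ⊕ S), Vd.card ≤ k ∧
        ∑ s : S, payoff (H.image Sum.inl) (Finset.univ.image Sum.inr) (coverGraph H)
          ((H.card : ℝ) + (Fintype.card S : ℝ))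
          ((H.filter (fun h => s ∈ h)).image Sum.inl) Vd = 0) := by
  constructor
  · rintro ⟨H', hsub, hcard, hHcov⟩
    refine ⟨H'.image Sum.inl, le_trans Finset.card_image_le hcard, ?_⟩
    refine Finset.sum_eq_zero fun s _ => ?_
    rw [payoff]
    have hbip : ∀ u v : Finset S ⊕ S, (coverGraph H).Adj u v →
        (u ∈ Finset.univ.image (Sum.inr : S → Finset S ⊕ S) ∧
          v ∈ H.image Sum.inl ∧ v ∉ Finset.univ.image (Sum.inr : S → Finset S ⊕ S)) ∨
        (v ∈ Finset.univ.image (Sum.inr : S → Finset S ⊕ S) ∧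
          u ∈ H.image Sum.inl ∧ u ∉ Finset.univ.image (Sum.inr : S → Finset S ⊕ S)) := by
      intro u v huv
      rw [coverGraph, SimpleGraph.fromRel_adj] at huv
      rcases huv.2 with ⟨h, hh, s0, _, rfl, rfl⟩ | ⟨h, hh, s0, _, rfl, rfl⟩
      · right; simp [hh]
      · left; simp [hh]
    have hα : (((H.image Sum.inl : Finset (Finset S ⊕ S))).card : ℝ) ≤
        1 + ((H.card : ℝ) + (Fintype.card S : ℝ)) := by
      rw [Finset.card_image_of_injective _ Sum.inl_injective]
      have h0 : (0 : ℝ) ≤ (Fintype.card S : ℝ) := by positivity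
      linarith
    have hfix := Fstar_fixed (H.image Sum.inl) (Finset.univ.image Sum.inr) (coverGraph H)
      (deleteVerts (coverGraph H)
        (((H.filter fun h => s ∈ h).image Sum.inl) \ (H'.image Sum.inl)))
      ((H.card : ℝ) + (Fintype.card S : ℝ)) (fun _ _ h => h.1) hbip hα
    rw [hfix]
    rw [disc, Finset.card_eq_zero, Finset.filter_eq_empty_iff]
    intro t ht
    simp only [Finset.mem_image, Finset.mem_univ, true_and] at ht
    obtain ⟨s', rfl⟩ := ht
    obtain ⟨h', hh'H', hs'h'⟩ := hHcov s'
    push_neg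
    refine ⟨Sum.inl h', ?_, by simp, SimpleGraph.Adj.reachable ?_⟩
    · exact Finset.mem_image_of_mem _ (hsub hh'H')
    · refine ⟨?_, ?_, ?_⟩
      · rw [coverGraph, SimpleGraph.fromRel_adj]
        exact ⟨by simp, Or.inr ⟨h', hsub hh'H', s', hs'h', rfl, rfl⟩⟩
      · intro hmem
        rw [Finset.mem_sdiff] at hmem
        obtain ⟨hmem1, _⟩ := hmem
        simp at hmem1
      · intro hmem
        rw [Finset.mem_sdiff] at hmem
        exact hmem.2 (Finset.mem_image_of_mem _ hh'H')
  · rintro ⟨Vd, hVd, hsum⟩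
    refine ⟨H.filter (fun h => Sum.inl h ∈ Vd), Finset.filter_subset _ _, ?_, ?_⟩
    · calc (H.filter (fun h => Sum.inl h ∈ Vd)).card
          = ((H.filter (fun h => Sum.inl h ∈ Vd)).image Sum.inl).card :=
            (Finset.card_image_of_injective _ Sum.inl_injective).symm
        _ ≤ Vd.card := by
            refine Finset.card_le_card ?_
            intro x hx
            simp only [Finset.mem_image, Finset.mem_filter] at hx
            obtain ⟨h, ⟨_, hmem⟩, rfl⟩ := hx
            exact hmem
        _ ≤ k := hVd
    · intro s
      have hp := (Finset.sum_eq_zero_iff).mp hsum s (Finset.mem_univ s)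
      rw [payoff, disc, Finset.card_eq_zero, Finset.filter_eq_empty_iff] at hp
      have hts : (Sum.inr s : Finset S ⊕ S) ∈ Finset.univ.image (Sum.inr : S → Finset S ⊕ S) := by
        simp
      have hcond := hp hts
      push_neg at hcond
      obtain ⟨src, _, hne, hreach⟩ := hcond
      obtain ⟨w, hw⟩ := exists_adj_of_reachable hreach (Ne.symm hne)
      have hwG : (deleteVerts (coverGraph H)
          (((H.filter fun h => s ∈ h).image Sum.inl) \ Vd)).Adj (Sum.inr s) w :=
        Fop_iter_le _ _ _ _ _ _ hw
      obtain ⟨hadj, _, hnw⟩ := hwG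
      rw [coverGraph, SimpleGraph.fromRel_adj] at hadj
      rcases hadj.2 with ⟨h, hh, s0, hs0, heq1, heq2⟩ | ⟨h, hh, s0, hs0, heq1, heq2⟩
      · exact absurd heq1 (by simp)
      · obtain rfl := heq1
        obtain rfl : s = s0 := by injection heq2
        have hVdmem : Sum.inl h ∈ Vd := by
          by_contra hcon
          exact hnw (Finset.mem_sdiff.mpr
            ⟨Finset.mem_image_of_mem _ (Finset.mem_filter.mpr ⟨hh, hs0⟩), hcon⟩)
        exact ⟨h, Finset.mem_filter.mpr ⟨hh, hVdmem⟩, hs0⟩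


end
end
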